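/- arXiv:1310.5295 — 4 statements merged into one kernel-verified Lean document; each statement's English description precedes it below -/
import Mathlib

section
/- Let $r \geq 2$ and let $n_1 \geq 2$, $n_2 \geq 2$ be natural numbers with $n_2$ even. Let $a_1, b_1 \geq 0$ with $a_1 + b_1 = n_1$ and $a_2, b_2 \geq 1$ both odd with $a_2 + b_2 = n_2$, and assume $a_1 + a_2 \geq 2$ and $b_1 + b_2 \geq 2$. Then $$\frac{a_1 b_1}{n_1 - 1}\left(\frac{1}{2} - \frac{1}{n_1}\right) + \frac{a_1 b_2 + a_2 b_1}{n_1 n_2} + \frac{a_2 b_2}{n_2 - 1}\left(\frac{2r+1}{16} - \frac{1}{n_2}\right) \;\geq\; \frac{2r+1}{16}.$$ -/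
set_option maxHeartbeats 1000000 in
theorem stmt_2 (r n1 n2 a1 b1 a2 b2 : ℕ) (hr : 2 ≤ r) (h1 : 2 ≤ n1) (h2 : 2 ≤ n2)
    (hev : Even n2)
    (hab1 : a1 + b1 = n1) (ha2 : 1 ≤ a2) (hb2 : 1 ≤ b2)
    (hoa : Odd a2) (hob : Odd b2) (hab2 : a2 + b2 = n2)
    (hI : 2 ≤ a1 + a2) (hJ : 2 ≤ b1 + b2) :
    ((a1 : ℚ) * (b1 : ℚ)) / ((n1 : ℚ) - 1) * (1 / 2 - 1 / (n1 : ℚ))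
      + ((a1 : ℚ) * (b2 : ℚ) + (a2 : ℚ) * (b1 : ℚ)) / ((n1 : ℚ) * (n2 : ℚ))
      + ((a2 : ℚ) * (b2 : ℚ)) / ((n2 : ℚ) - 1) * ((2 * (r : ℚ) + 1) / 16 - 1 / (n2 : ℚ))
      ≥ (2 * (r : ℚ) + 1) / 16 := by
  have hn1 : (2:ℚ) ≤ (n1:ℚ) := by exact_mod_cast h1
  have hn2 : (2:ℚ) ≤ (n2:ℚ) := by exact_mod_cast h2
  have ha2' : (1:ℚ) ≤ (a2:ℚ) := by exact_mod_cast ha2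
  have hb2' : (1:ℚ) ≤ (b2:ℚ) := by exact_mod_cast hb2
  have ha1 : (0:ℚ) ≤ (a1:ℚ) := by positivity
  have hb1 : (0:ℚ) ≤ (b1:ℚ) := by positivity
  have hr' : (0:ℚ) ≤ (r:ℚ) := by positivity
  have e1 : (a1:ℚ) + b1 = n1 := by exact_mod_cast hab1
  have e2 : (a2:ℚ) + b2 = n2 := by exact_mod_cast hab2
  rw [← e1, ← e2]
  have hn1' : (2:ℚ) ≤ (a1:ℚ) + b1 := by rw [e1]; exact hn1
  have hn2' : (2:ℚ) ≤ (a2:ℚ) + b2 := by rw [e2]; exact hn2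
  have hn1p : (0:ℚ) < (a1:ℚ) + b1 := by linarith
  have hn2p : (0:ℚ) < (a2:ℚ) + b2 := by linarith
  have hd1 : (0:ℚ) < (a1:ℚ) + b1 - 1 := by linarith
  have hd2 : (0:ℚ) < (a2:ℚ) + b2 - 1 := by linarith
  set c : ℚ := (2 * (r : ℚ) + 1) / 16 with hc
  have hcpos : (0:ℚ) ≤ c := by positivity
  have T1 : (0:ℚ) ≤ ((a1 : ℚ) * (b1 : ℚ)) / (((a1:ℚ) + b1) - 1) * (1 / 2 - 1 / ((a1:ℚ) + b1)) := by
    apply mul_nonneg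
    · positivity
    · rw [sub_nonneg, div_le_div_iff₀ hn1p (by norm_num)]; linarith
  rcases le_total (a2:ℚ) (b2:ℚ) with hm | hm
  · have T2 : ((a2:ℚ)) / ((a2:ℚ) + b2) ≤ ((a1 : ℚ) * (b2 : ℚ) + (a2 : ℚ) * (b1 : ℚ)) / (((a1:ℚ) + b1) * ((a2:ℚ) + b2)) := by
      rw [div_le_div_iff₀ hn2p (by positivity)]
      nlinarith [mul_nonneg (mul_nonneg hn2p.le ha1) (sub_nonneg.2 hm)]
    have key : ((a2:ℚ)) / ((a2:ℚ) + b2) + ((a2 : ℚ) * (b2 : ℚ)) / (((a2:ℚ) + b2) - 1) * (c - 1 / ((a2:ℚ) + b2)) - c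
        = ((a2:ℚ) * ((a2:ℚ) - 1) + c * ((a2:ℚ) + b2) * ((a2:ℚ) - 1) * ((b2:ℚ) - 1)) / ((((a2:ℚ) + b2) - 1) * ((a2:ℚ) + b2)) := by
      field_simp
      ring
    have T3 : c ≤ ((a2:ℚ)) / ((a2:ℚ) + b2) + ((a2 : ℚ) * (b2 : ℚ)) / (((a2:ℚ) + b2) - 1) * (c - 1 / ((a2:ℚ) + b2)) := by
      rw [← sub_nonneg, key]
      apply div_nonneg _ (by positivity)
      have h4 := mul_nonneg (mul_nonneg (mul_nonneg hcpos hn2p.le) (sub_nonneg.2 ha2')) (sub_nonneg.2 hb2')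
      nlinarith [sub_nonneg.2 ha2']
    linarith
  · have T2 : ((b2:ℚ)) / ((a2:ℚ) + b2) ≤ ((a1 : ℚ) * (b2 : ℚ) + (a2 : ℚ) * (b1 : ℚ)) / (((a1:ℚ) + b1) * ((a2:ℚ) + b2)) := by
      rw [div_le_div_iff₀ hn2p (by positivity)]
      nlinarith [mul_nonneg (mul_nonneg hn2p.le hb1) (sub_nonneg.2 hm)]
    have key : ((b2:ℚ)) / ((a2:ℚ) + b2) + ((a2 : ℚ) * (b2 : ℚ)) / (((a2:ℚ) + b2) - 1) * (c - 1 / ((a2:ℚ) + b2)) - c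
        = ((b2:ℚ) * ((b2:ℚ) - 1) + c * ((a2:ℚ) + b2) * ((a2:ℚ) - 1) * ((b2:ℚ) - 1)) / ((((a2:ℚ) + b2) - 1) * ((a2:ℚ) + b2)) := by
      field_simp
      ring
    have T3 : c ≤ ((b2:ℚ)) / ((a2:ℚ) + b2) + ((a2 : ℚ) * (b2 : ℚ)) / (((a2:ℚ) + b2) - 1) * (c - 1 / ((a2:ℚ) + b2)) := by
      rw [← sub_nonneg, key]
      apply div_nonneg _ (by positivity)
      have h4 := mul_nonneg (mul_nonneg (mul_nonneg hcpos hn2p.le) (sub_nonneg.2 ha2')) (sub_nonneg.2 hb2')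
      nlinarith [sub_nonneg.2 hb2']
    linarith
end

section
/- Let $r \geq 2$ and let $n_1 \geq 2$, $n_2 \geq 2$ be natural numbers with $n_2$ even. Let $a_1, b_1 \geq 0$ with $a_1 + b_1 = n_1$ and $a_2, b_2 \geq 0$ both even with $a_2 + b_2 = n_2$, and assume $a_1 + a_2 \geq 2$ and $b_1 + b_2 \geq 2$. Then $$\frac{a_1 b_1}{n_1 - 1}\left(\frac{1}{2} - \frac{1}{n_1}\right) + \frac{a_1 b_2 + a_2 b_1}{n_1 n_2} + \frac{a_2 b_2}{n_2 - 1}\left(\frac{2r+1}{16} - \frac{1}{n_2}\right) \;\geq\; \frac{1}{4}.$$ -/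
set_option maxHeartbeats 1000000


theorem stmt_3 (r n1 n2 a1 b1 a2 b2 : ℕ) (hr : 2 ≤ r) (h1 : 2 ≤ n1) (h2 : 2 ≤ n2)
    (hev : Even n2)
    (hab1 : a1 + b1 = n1)
    (hea : Even a2) (heb : Even b2) (hab2 : a2 + b2 = n2)
    (hI : 2 ≤ a1 + a2) (hJ : 2 ≤ b1 + b2) :
    ((a1 : ℚ) * (b1 : ℚ)) / ((n1 : ℚ) - 1) * (1 / 2 - 1 / (n1 : ℚ))
      + ((a1 : ℚ) * (b2 : ℚ) + (a2 : ℚ) * (b1 : ℚ)) / ((n1 : ℚ) * (n2 : ℚ))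
      + ((a2 : ℚ) * (b2 : ℚ)) / ((n2 : ℚ) - 1) * ((2 * (r : ℚ) + 1) / 16 - 1 / (n2 : ℚ))
      ≥ 1 / 4 := by
  have hN1 : (2:ℚ) ≤ (n1:ℚ) := by exact_mod_cast h1
  have hN2 : (2:ℚ) ≤ (n2:ℚ) := by exact_mod_cast h2
  have hR : (2:ℚ) ≤ (r:ℚ) := by exact_mod_cast hr
  have hAB1 : (a1:ℚ) + (b1:ℚ) = (n1:ℚ) := by exact_mod_cast hab1
  have hAB2 : (a2:ℚ) + (b2:ℚ) = (n2:ℚ) := by exact_mod_cast hab2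
  have ha1 : (0:ℚ) ≤ (a1:ℚ) := Nat.cast_nonneg _
  have hb1 : (0:ℚ) ≤ (b1:ℚ) := Nat.cast_nonneg _
  have ha2 : (0:ℚ) ≤ (a2:ℚ) := Nat.cast_nonneg _
  have hb2 : (0:ℚ) ≤ (b2:ℚ) := Nat.cast_nonneg _
  have hn1pos : (0:ℚ) < (n1:ℚ) := by linarith
  have hn2pos : (0:ℚ) < (n2:ℚ) := by linarith
  have hn1m : (0:ℚ) < (n1:ℚ) - 1 := by linarith
  have hn2m : (0:ℚ) < (n2:ℚ) - 1 := by linarith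
  have hn1ne : (n1:ℚ) ≠ 0 := ne_of_gt hn1pos
  have hn2ne : (n2:ℚ) ≠ 0 := ne_of_gt hn2pos
  have hn1mne : (n1:ℚ) - 1 ≠ 0 := ne_of_gt hn1m
  have hn2mne : (n2:ℚ) - 1 ≠ 0 := ne_of_gt hn2m
  -- polynomial key inequality
  have key : 0 ≤ 8*(a1:ℚ)*(b1:ℚ)*(n2:ℚ)*((n2:ℚ)-1)*((n1:ℚ)-2)
      + 16*((a1:ℚ)*(b2:ℚ)+(a2:ℚ)*(b1:ℚ))*((n1:ℚ)-1)*((n2:ℚ)-1)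
      + (a2:ℚ)*(b2:ℚ)*(n1:ℚ)*((n1:ℚ)-1)*((2*(r:ℚ)+1)*(n2:ℚ)-16)
      - 4*(n1:ℚ)*(n2:ℚ)*((n1:ℚ)-1)*((n2:ℚ)-1) := by
    -- reduce r to 2
    have hr5 : 0 ≤ (a2:ℚ)*(b2:ℚ)*(n1:ℚ)*((n1:ℚ)-1)*((2*(r:ℚ)+1)*(n2:ℚ) - (5*(n2:ℚ))) := by
      have : (0:ℚ) ≤ (2*(r:ℚ)+1) - 5 := by linarith
      have h := mul_nonneg (mul_nonneg (mul_nonneg (mul_nonneg ha2 hb2) hn1pos.le) hn1m.le)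
        (mul_nonneg this hn2pos.le)
      nlinarith [h]
    have key5 : 0 ≤ 8*(a1:ℚ)*(b1:ℚ)*(n2:ℚ)*((n2:ℚ)-1)*((n1:ℚ)-2)
        + 16*((a1:ℚ)*(b2:ℚ)+(a2:ℚ)*(b1:ℚ))*((n1:ℚ)-1)*((n2:ℚ)-1)
        + (a2:ℚ)*(b2:ℚ)*(n1:ℚ)*((n1:ℚ)-1)*(5*(n2:ℚ)-16)
        - 4*(n1:ℚ)*(n2:ℚ)*((n1:ℚ)-1)*((n2:ℚ)-1) := by
      rcases Nat.eq_zero_or_pos a2 with ha2z | ha2pos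
      · -- a2 = 0, b2 = n2, a1 ≥ 2
        subst ha2z
        push_cast at hAB2 hI ⊢
        have hb2n : (b2:ℚ) = (n2:ℚ) := by linarith [hAB2]
        have ha12 : (2:ℚ) ≤ (a1:ℚ) := by exact_mod_cast (by omega : 2 ≤ a1)
        rw [hb2n]
        have hn1e : (n1:ℚ) = (a1:ℚ) + (b1:ℚ) := hAB1.symm
        have hQ : 0 ≤ 2*(a1:ℚ)*(b1:ℚ)*((n1:ℚ)-2) + 4*(a1:ℚ)*((n1:ℚ)-1) - (n1:ℚ)*((n1:ℚ)-1) := by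
          rw [hn1e]
          nlinarith [mul_nonneg (mul_nonneg hb1 hb1) (by linarith : (0:ℚ) ≤ 2*(a1:ℚ)-1),
            mul_nonneg ha1 (by linarith : (0:ℚ) ≤ (a1:ℚ)-1),
            mul_nonneg (mul_nonneg ha1 hb1) (by linarith : (0:ℚ) ≤ (a1:ℚ)-1), hb1]
        nlinarith [mul_nonneg (mul_nonneg hn2pos.le hn2m.le) hQ]
      · rcases Nat.eq_zero_or_pos b2 with hb2z | hb2pos
        · -- b2 = 0, a2 = n2, b1 ≥ 2
          subst hb2z
          push_cast at hAB2 hJ ⊢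
          have ha2n : (a2:ℚ) = (n2:ℚ) := by linarith [hAB2]
          have hb12 : (2:ℚ) ≤ (b1:ℚ) := by exact_mod_cast (by omega : 2 ≤ b1)
          rw [ha2n]
          have hn1e : (n1:ℚ) = (a1:ℚ) + (b1:ℚ) := hAB1.symm
          have hQ : 0 ≤ 2*(a1:ℚ)*(b1:ℚ)*((n1:ℚ)-2) + 4*(b1:ℚ)*((n1:ℚ)-1) - (n1:ℚ)*((n1:ℚ)-1) := by
            rw [hn1e]
            nlinarith [mul_nonneg (mul_nonneg ha1 ha1) (by linarith : (0:ℚ) ≤ 2*(b1:ℚ)-1),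
              mul_nonneg hb1 (by linarith : (0:ℚ) ≤ (b1:ℚ)-1),
              mul_nonneg (mul_nonneg ha1 hb1) (by linarith : (0:ℚ) ≤ (b1:ℚ)-1), ha1]
          nlinarith [mul_nonneg (mul_nonneg hn2pos.le hn2m.le) hQ]
        · -- a2 ≥ 2, b2 ≥ 2 (even and positive)
          have ha22 : (2:ℚ) ≤ (a2:ℚ) := by
            have : 2 ≤ a2 := by rcases hea with ⟨k,hk⟩; omega
            exact_mod_cast this
          have hb22 : (2:ℚ) ≤ (b2:ℚ) := by
            have : 2 ≤ b2 := by rcases heb with ⟨k,hk⟩; omega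
            exact_mod_cast this
          have hn24 : (4:ℚ) ≤ (n2:ℚ) := by linarith
          -- term1 ≥ 0
          have t1 : 0 ≤ 8*(a1:ℚ)*(b1:ℚ)*(n2:ℚ)*((n2:ℚ)-1)*((n1:ℚ)-2) := by
            have := mul_nonneg (mul_nonneg (mul_nonneg (mul_nonneg
              (mul_nonneg (by norm_num : (0:ℚ) ≤ 8) ha1) hb1) hn2pos.le) hn2m.le)
              (by linarith : (0:ℚ) ≤ (n1:ℚ) - 2)
            linarith [this]
          -- remaining = (n1-1) * G with G ≥ 0
          have hG : 0 ≤ 16*((a1:ℚ)*(b2:ℚ)+(a2:ℚ)*(b1:ℚ))*((n2:ℚ)-1)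
              + (a2:ℚ)*(b2:ℚ)*(n1:ℚ)*(5*(n2:ℚ)-16)
              - 4*(n1:ℚ)*(n2:ℚ)*((n2:ℚ)-1) := by
            have hflow : 2*(n1:ℚ) ≤ (a1:ℚ)*(b2:ℚ)+(a2:ℚ)*(b1:ℚ) := by
              nlinarith [mul_nonneg ha1 (by linarith : (0:ℚ) ≤ (b2:ℚ)-2),
                mul_nonneg hb1 (by linarith : (0:ℚ) ≤ (a2:ℚ)-2)]
            have hprod : 2*((n2:ℚ)-2) ≤ (a2:ℚ)*(b2:ℚ) := by
              nlinarith [mul_nonneg (by linarith : (0:ℚ) ≤ (a2:ℚ)-2) (by linarith : (0:ℚ) ≤ (b2:ℚ)-2)]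
            nlinarith [mul_nonneg (by linarith : (0:ℚ) ≤ ((a1:ℚ)*(b2:ℚ)+(a2:ℚ)*(b1:ℚ)) - 2*(n1:ℚ)) (by linarith : (0:ℚ) ≤ (n2:ℚ)-1),
              mul_nonneg (mul_nonneg (by linarith : (0:ℚ) ≤ (a2:ℚ)*(b2:ℚ) - 2*((n2:ℚ)-2)) hn1pos.le) (by linarith : (0:ℚ) ≤ 5*(n2:ℚ)-16),
              mul_nonneg hn1pos.le (by nlinarith : (0:ℚ) ≤ 6*(n2:ℚ)^2 - 16*(n2:ℚ) + 32)]
          nlinarith [mul_nonneg hn1m.le hG, t1]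
    nlinarith [hr5, key5]
  rw [ge_iff_le, ← sub_nonneg]
  have heq : ((a1 : ℚ) * (b1 : ℚ)) / ((n1 : ℚ) - 1) * (1 / 2 - 1 / (n1 : ℚ))
      + ((a1 : ℚ) * (b2 : ℚ) + (a2 : ℚ) * (b1 : ℚ)) / ((n1 : ℚ) * (n2 : ℚ))
      + ((a2 : ℚ) * (b2 : ℚ)) / ((n2 : ℚ) - 1) * ((2 * (r : ℚ) + 1) / 16 - 1 / (n2 : ℚ))
      - 1 / 4
      = (8*(a1:ℚ)*(b1:ℚ)*(n2:ℚ)*((n2:ℚ)-1)*((n1:ℚ)-2)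
      + 16*((a1:ℚ)*(b2:ℚ)+(a2:ℚ)*(b1:ℚ))*((n1:ℚ)-1)*((n2:ℚ)-1)
      + (a2:ℚ)*(b2:ℚ)*(n1:ℚ)*((n1:ℚ)-1)*((2*(r:ℚ)+1)*(n2:ℚ)-16)
      - 4*(n1:ℚ)*(n2:ℚ)*((n1:ℚ)-1)*((n2:ℚ)-1))
      / (16*(n1:ℚ)*(n2:ℚ)*((n1:ℚ)-1)*((n2:ℚ)-1)) := by
    field_simp
    ring
  rw [heq]
  apply div_nonneg key
  positivity
end

section
/- Let $r \geq 3$, $n_1 \geq 2$, $n_2 \geq 2$. Let $a_1, b_1 \geq 0$ with $a_1 + b_1 = n_1$, and $a_2, b_2 \geq 0$ with $a_2 + b_2 = n_2$ and $a_2 b_2 = 0$, and assume $a_1 + a_2 \geq 2$ and $b_1 + b_2 \geq 2$. Then $$\frac{a_1 b_1}{n_1 - 1}\left(\frac{1}{2} - \frac{1}{n_1}\right) + \frac{a_2 b_2}{n_2 - 1}\left(\frac{r}{8} - \frac{1}{n_2}\right) + \frac{a_1 b_2 + a_2 b_1}{n_1 n_2} \;\geq\; \frac{1}{2}.$$ 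-/
lemma key_aux (a b n : ℚ) (hn : 2 ≤ n) (hab : a + b = n) (ha : 2 ≤ a) (hb : 0 ≤ b) :
    a * b / (n - 1) * (1 / 2 - 1 / n) + a / n ≥ 1 / 2 := by
  have hn0 : (0:ℚ) < n := by linarith
  have hn1 : (0:ℚ) < n - 1 := by linarith
  rw [ge_iff_le, ← sub_nonneg]
  have h : a * b / (n - 1) * (1 / 2 - 1 / n) + a / n - 1 / 2
      = (a * b * (n - 2) + 2 * a * (n - 1) - n * (n - 1)) / (2 * n * (n - 1)) := by
    field_simp
  rw [h]
  apply div_nonneg _ (by positivity)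
  nlinarith [mul_nonneg (mul_nonneg (by linarith : (0:ℚ) ≤ a - 2) hb) (by linarith : (0:ℚ) ≤ n - 2),
    sq_nonneg (n - 2), mul_nonneg (by linarith : (0:ℚ) ≤ a - 2) (by linarith : (0:ℚ) ≤ n - 1)]

theorem stmt_5 (r n1 n2 a1 b1 a2 b2 : ℕ) (hr : 3 ≤ r) (h1 : 2 ≤ n1) (h2 : 2 ≤ n2)
    (hab1 : a1 + b1 = n1) (hab2 : a2 + b2 = n2) (hzero : a2 * b2 = 0)
    (hI : 2 ≤ a1 + a2) (hJ : 2 ≤ b1 + b2) :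
    ((a1 : ℚ) * (b1 : ℚ)) / ((n1 : ℚ) - 1) * (1 / 2 - 1 / (n1 : ℚ))
      + ((a2 : ℚ) * (b2 : ℚ)) / ((n2 : ℚ) - 1) * ((r : ℚ) / 8 - 1 / (n2 : ℚ))
      + ((a1 : ℚ) * (b2 : ℚ) + (a2 : ℚ) * (b1 : ℚ)) / ((n1 : ℚ) * (n2 : ℚ))
      ≥ 1 / 2 := by
  have hn1Q : (2:ℚ) ≤ (n1:ℚ) := by exact_mod_cast h1
  have hn2Q : (0:ℚ) < (n2:ℚ) := by exact_mod_cast Nat.lt_of_lt_of_le two_pos h2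
  have hn1pos : (0:ℚ) < (n1:ℚ) := by linarith
  have habQ : (a1:ℚ) + (b1:ℚ) = (n1:ℚ) := by exact_mod_cast hab1
  rcases Nat.mul_eq_zero.mp hzero with h0 | h0
  · -- a2 = 0, so b2 = n2, a1 ≥ 2
    subst h0
    have hb2 : b2 = n2 := by omega
    subst hb2
    have ha1 : 2 ≤ a1 := by omega
    have ha1Q : (2:ℚ) ≤ (a1:ℚ) := by exact_mod_cast ha1
    have hb1Q : (0:ℚ) ≤ (b1:ℚ) := by positivity
    have key := key_aux (a1:ℚ) (b1:ℚ) (n1:ℚ) hn1Q habQ ha1Q hb1Q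
    have e1 : ((a1:ℚ) * (b2:ℚ) + (0:ℕ) * (b1:ℚ)) / ((n1:ℚ) * (b2:ℚ)) = (a1:ℚ) / (n1:ℚ) := by
      push_cast
      field_simp
      ring
    push_cast at e1 ⊢
    rw [e1]
    simpa using key
  · -- b2 = 0, so a2 = n2, b1 ≥ 2
    subst h0
    have ha2 : a2 = n2 := by omega
    subst ha2
    have hb1 : 2 ≤ b1 := by omega
    have hb1Q : (2:ℚ) ≤ (b1:ℚ) := by exact_mod_cast hb1
    have ha1Q : (0:ℚ) ≤ (a1:ℚ) := by positivity
    have key := key_aux (b1:ℚ) (a1:ℚ) (n1:ℚ) hn1Q (by linarith) hb1Q ha1Q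
    have e1 : ((a1:ℚ) * (0:ℚ) + (a2:ℚ) * (b1:ℚ)) / ((n1:ℚ) * (a2:ℚ)) = (b1:ℚ) / (n1:ℚ) := by
      field_simp
      ring
    push_cast
    rw [e1]
    have : (a1:ℚ) * (b1:ℚ) = (b1:ℚ) * (a1:ℚ) := by ring
    rw [this]
    simpa using key
end

section
/- Let $r \geq 3$, $n_1 \geq 2$, $n_2 \geq 2$. Let $a_1, b_1 \geq 0$ with $a_1 + b_1 = n_1$, and $a_2, b_2 \geq 1$ with $a_2 + b_2 = n_2$, and assume $a_1 + a_2 \geq 2$ and $b_1 + b_2 \geq 2$. Then $$\frac{a_1 b_1}{n_1 - 1}\left(\frac{1}{2} - \frac{1}{n_1}\right) + \frac{a_2 b_2}{n_2 - 1}\left(\frac{r}{8} - \frac{1}{n_2}\right) + \frac{a_1 b_2 + a_2 b_1}{n_1 n_2} \;\geq\; \frac{r}{8}.$$ -/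
set_option maxHeartbeats 1000000

lemma keyQ (x y u v : ℚ) (hx : 0 ≤ x) (hy : 0 ≤ y) (hu : 1 ≤ u) (hv : 1 ≤ v)
    (hn : 2 ≤ x + y) :
    0 ≤ x*y*(u+v)*(u+v-1)*(4*(x+y)-8) + u*v*(x+y)*(x+y-1)*(3*(u+v)-8)
      + 8*(x*v+u*y)*(x+y-1)*(u+v-1) - 3*(x+y)*(u+v)*(x+y-1)*(u+v-1) := by
  have hp : 0 ≤ u - 1 := by linarith
  have hq : 0 ≤ v - 1 := by linarith
  have hn1 : 0 ≤ x + y - 1 := by linarith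
  have hm1 : 0 ≤ u + v - 1 := by linarith
  have hn2 : 0 ≤ x + y - 2 := by linarith
  have hm2 : 0 ≤ u + v - 2 := by linarith
  have t3 : 0 ≤ x*y*(u+v)*(u+v-1)*(4*(x+y)-8) := by
    apply mul_nonneg (mul_nonneg (mul_nonneg (mul_nonneg hx hy) (by linarith)) hm1)
    linarith
  have t2 : 0 ≤ 8*(x+y-1)*(u+v-1)*(x*(v-1)+y*(u-1)) := by
    apply mul_nonneg (mul_nonneg (by linarith) hm1)
    exact add_nonneg (mul_nonneg hx hq) (mul_nonneg hy hp)
  rcases le_total 8 (3*(u+v)) with h | h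
  · have t1 : 0 ≤ (x+y)*(x+y-1)*(3*(u+v)-8)*((u-1)*(v-1)) := by
      apply mul_nonneg (mul_nonneg (mul_nonneg (by linarith) hn1) (by linarith))
      exact mul_nonneg hp hq
    linarith [t1, t2, t3]
  · have g2 : 0 ≤ 3*(u+v-2)*(x+y)*(x+y-1)*((u-1)*(v-1)) := by
      apply mul_nonneg (mul_nonneg (mul_nonneg (by linarith) (by linarith)) hn1)
      exact mul_nonneg hp hq
    have g3 : 0 ≤ (u+v-2)*(x+y-1)*(x*(v-1)+y*(u-1)) := by
      apply mul_nonneg (mul_nonneg hm2 hn1)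
      exact add_nonneg (mul_nonneg hx hq) (mul_nonneg hy hp)
    have g4 : 0 ≤ (x+y-1)*(x*(v-1))*(2-3*(u-1)) := by
      apply mul_nonneg (mul_nonneg hn1 (mul_nonneg hx hq))
      linarith
    have g5 : 0 ≤ (x+y-1)*(y*(u-1))*(2-3*(v-1)) := by
      apply mul_nonneg (mul_nonneg hn1 (mul_nonneg hy hp))
      linarith
    have g6 : 0 ≤ (x+y-1)*(x*(v-1)) := mul_nonneg hn1 (mul_nonneg hx hq)
    have g7 : 0 ≤ (x+y-1)*(y*(u-1)) := mul_nonneg hn1 (mul_nonneg hy hp)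
    linarith [t3, g2, g3, g4, g5, g6, g7]

theorem stmt_6 (r n1 n2 a1 b1 a2 b2 : ℕ) (hr : 3 ≤ r) (h1 : 2 ≤ n1) (h2 : 2 ≤ n2)
    (hab1 : a1 + b1 = n1) (ha2 : 1 ≤ a2) (hb2 : 1 ≤ b2) (hab2 : a2 + b2 = n2)
    (hI : 2 ≤ a1 + a2) (hJ : 2 ≤ b1 + b2) :
    ((a1 : ℚ) * (b1 : ℚ)) / ((n1 : ℚ) - 1) * (1 / 2 - 1 / (n1 : ℚ))
      + ((a2 : ℚ) * (b2 : ℚ)) / ((n2 : ℚ) - 1) * ((r : ℚ) / 8 - 1 / (n2 : ℚ))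
      + ((a1 : ℚ) * (b2 : ℚ) + (a2 : ℚ) * (b1 : ℚ)) / ((n1 : ℚ) * (n2 : ℚ))
      ≥ (r : ℚ) / 8 := by
  subst hab1 hab2
  have hx : (0:ℚ) ≤ (a1:ℚ) := by positivity
  have hy : (0:ℚ) ≤ (b1:ℚ) := by positivity
  have hu : (1:ℚ) ≤ (a2:ℚ) := by exact_mod_cast ha2
  have hv : (1:ℚ) ≤ (b2:ℚ) := by exact_mod_cast hb2
  have hn : (2:ℚ) ≤ (a1:ℚ) + (b1:ℚ) := by exact_mod_cast h1
  have hm : (2:ℚ) ≤ (a2:ℚ) + (b2:ℚ) := by exact_mod_cast h2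
  have hR : (3:ℚ) ≤ (r:ℚ) := by exact_mod_cast hr
  have hd1 : (0:ℚ) < (a1:ℚ) + (b1:ℚ) - 1 := by linarith
  have hd2 : (0:ℚ) < (a2:ℚ) + (b2:ℚ) - 1 := by linarith
  have hd3 : (0:ℚ) < (a1:ℚ) + (b1:ℚ) := by linarith
  have hd4 : (0:ℚ) < (a2:ℚ) + (b2:ℚ) := by linarith
  set x := (a1:ℚ); set y := (b1:ℚ); set u := (a2:ℚ); set v := (b2:ℚ); set R := (r:ℚ)
  have hP3 := keyQ x y u v hx hy hu hv hn
  have hrest : 0 ≤ (R - 3) * ((x+y) * (u+v) * (x+y-1) * ((u-1)*(v-1))) := by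
    apply mul_nonneg (by linarith)
    apply mul_nonneg (mul_nonneg (mul_nonneg (by linarith) (by linarith)) (by linarith))
    exact mul_nonneg (by linarith) (by linarith)
  have hP : 0 ≤ x*y*(u+v)*(u+v-1)*(4*(x+y)-8) + u*v*(x+y)*(x+y-1)*(R*(u+v)-8)
      + 8*(x*v+u*y)*(x+y-1)*(u+v-1) - R*(x+y)*(u+v)*(x+y-1)*(u+v-1) := by
    linarith [hP3, hrest]
  rw [ge_iff_le, ← sub_nonneg]
  have key : x * y / ((x+y) - 1) * (1 / 2 - 1 / (x+y))
      + u * v / ((u+v) - 1) * (R / 8 - 1 / (u+v))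
      + (x * v + u * y) / ((x+y) * (u+v)) - R / 8
      = (x*y*(u+v)*(u+v-1)*(4*(x+y)-8) + u*v*(x+y)*(x+y-1)*(R*(u+v)-8)
        + 8*(x*v+u*y)*(x+y-1)*(u+v-1) - R*(x+y)*(u+v)*(x+y-1)*(u+v-1))
        / (8 * (x+y) * (u+v) * ((x+y)-1) * ((u+v)-1)) := by
    field_simp
    ring
  push_cast
  rw [key]
  positivity
end
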